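/- Let V be a finite-dimensional vector space with a filtration by subspaces stable under an invertible operator Φ and a nilpotent operator N satisfying ΦNΦ⁻¹ = q⁻¹N. Suppose the associated graded module Gr(V), with its induced Φ and N, is q-pure of weight j (modeled as: dim ker(N^{i+1}) - dim ker(N^i) on Gr(V) matches the multiplicity pattern forced by purity, equivalently b(Gr(V)) = b(W,m) for the common eigenvalue-multiplicity data (W,m)). Then V is q-pure of weight j. In the key quantitative step: dim ker(N on Gr(V)) ≥ dim ker(N on V) ≥ b(W,m), and equality dim ker(N on V) = b(W,m) holds, where b(W,m) = Σ_{|α|≥q^{j/2}} (m(α) − m(qα)). -/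

import Mathlib

open Module

/-- The multiplicity of `α` in the spectrum of `Φ`: the dimension of the generalized
eigenspace. -/
noncomputable def specMult {V : Type*} [AddCommGroup V] [Module ℂ V]
    (Φ : V →ₗ[ℂ] V) (α : ℂ) : ℕ :=
  Module.finrank ℂ (Module.End.maxGenEigenspace Φ α)

/-- The quantity `b(W, m) = Σ_{|α| ≥ q^{j/2}} (m(α) − m(qα))` attached to the eigenvalue
data of `Φ`. -/
noncomputable def bWM {V : Type*} [AddCommGroup V] [Module ℂ V]
    (q : ℝ) (j : ℤ) (Φ : V →ₗ[ℂ] V) (W : Finset ℂ) : ℕ :=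
  ∑ α ∈ W.filter (fun α => q ^ ((j : ℝ) / 2) ≤ ‖α‖),
    (specMult Φ α - specMult Φ ((q : ℂ) * α))

lemma sum_finrank_eq_finrank_sup {V : Type*} [AddCommGroup V] [Module ℂ V]
    [FiniteDimensional ℂ V] {K : ℂ → Submodule ℂ V} (h : iSupIndep K) (s : Finset ℂ) :
    ∑ α ∈ s, finrank ℂ (K α) = finrank ℂ ↥(s.sup K) := by
  classical
  induction s using Finset.induction_on with
  | empty =>
    show (0:ℕ) = finrank ℂ ↥(⊥ : Submodule ℂ V)
    simp
  | @insert a s ha ih =>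
    rw [Finset.sum_insert ha, Finset.sup_insert, ih]
    have hdisj : Disjoint (K a) (s.sup K) := by
      refine (h a).mono_right ?_
      refine Finset.sup_le fun b hb => ?_
      exact le_iSup₂ (f := fun b (_ : b ≠ a) => K b) b (by rintro rfl; exact ha hb)
    have h2 := Submodule.finrank_sup_add_finrank_inf_eq (K a) (s.sup K)
    rw [hdisj.eq_bot, finrank_bot, add_zero] at h2
    omega

lemma comm_pow {V : Type*} [AddCommGroup V] [Module ℂ V]
    (Φ N : Module.End ℂ V) (c : ℂ) (hc : c ≠ 0)
    (hrel : N * Φ = c • (Φ * N)) (β : ℂ) (k : ℕ) :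
    (Φ - β • 1) ^ k * N = (c⁻¹) ^ k • (N * (Φ - (c * β) • 1) ^ k) := by
  have base : (Φ - β • 1) * N = c⁻¹ • (N * (Φ - (c * β) • 1)) := by
    have h1 : Φ * N = c⁻¹ • (N * Φ) := by
      rw [hrel, smul_smul, inv_mul_cancel₀ hc, one_smul]
    rw [sub_mul, mul_sub, h1, smul_sub]
    congr 1
    rw [smul_mul_assoc, one_mul, mul_smul_comm, mul_one, smul_smul,
      inv_mul_cancel_left₀ hc]
  induction k with
  | zero => simp
  | succ k ih =>
    rw [pow_succ (Φ - β • 1), mul_assoc, base, mul_smul_comm, ← mul_assoc, ih,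
      smul_mul_assoc, smul_smul, mul_assoc, ← pow_succ, pow_succ c⁻¹, mul_comm c⁻¹]

lemma N_maps_eigen {V : Type*} [AddCommGroup V] [Module ℂ V]
    (Φ N : V →ₗ[ℂ] V) (c : ℂ) (hc : c ≠ 0)
    (hrel : N ∘ₗ Φ = c • (Φ ∘ₗ N)) (α : ℂ) :
    ∀ v ∈ Module.End.maxGenEigenspace Φ α, N v ∈ Module.End.maxGenEigenspace Φ (c⁻¹ * α) := by
  intro v hv
  rw [Module.End.mem_maxGenEigenspace] at hv ⊢
  obtain ⟨k, hk⟩ := hv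
  refine ⟨k, ?_⟩
  have hmul : c * (c⁻¹ * α) = α := by field_simp
  have hcp := comm_pow Φ N c hc hrel (c⁻¹ * α) k
  rw [hmul] at hcp
  calc ((Φ - (c⁻¹ * α) • 1) ^ k) (N v)
      = (((Φ - (c⁻¹ * α) • 1) ^ k) * N) v := rfl
    _ = ((c⁻¹) ^ k • (N * (Φ - α • 1) ^ k)) v := by rw [hcp]
    _ = (c⁻¹) ^ k • N (((Φ - α • 1) ^ k) v) := rfl
    _ = 0 := by rw [hk, map_zero, smul_zero]

lemma specMult_le_ker_add {V : Type*} [AddCommGroup V] [Module ℂ V] [FiniteDimensional ℂ V]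
    (Φ N : V →ₗ[ℂ] V) (α β : ℂ)
    (hmaps : ∀ v ∈ Module.End.maxGenEigenspace Φ α, N v ∈ Module.End.maxGenEigenspace Φ β) :
    specMult Φ α ≤
      finrank ℂ ↥(Module.End.maxGenEigenspace Φ α ⊓ LinearMap.ker N) + specMult Φ β := by
  set E := Module.End.maxGenEigenspace Φ α
  set Nr := N.restrict hmaps
  have h1 := LinearMap.finrank_range_add_finrank_ker Nr
  have h2 : LinearMap.ker Nr = (LinearMap.ker N).comap E.subtype :=
    LinearMap.ker_restrict hmaps
  have h3 : finrank ℂ ↥(LinearMap.ker Nr) = finrank ℂ ↥(E ⊓ LinearMap.ker N) := by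
    rw [h2, ← Submodule.map_comap_subtype]
    exact (Submodule.equivSubtypeMap E ((LinearMap.ker N).comap E.subtype)).finrank_eq
  have h4 : finrank ℂ ↥(LinearMap.range Nr) ≤ specMult Φ β := Submodule.finrank_le _
  have h5 : specMult Φ α = finrank ℂ ↥E := rfl
  omega

lemma mem_of_specMult_pos {V : Type*} [AddCommGroup V] [Module ℂ V] [FiniteDimensional ℂ V]
    (Φ : V →ₗ[ℂ] V) (β : ℂ) (h : 0 < specMult Φ β) : Module.End.HasEigenvalue Φ β := by
  have hne : Module.End.maxGenEigenspace Φ β ≠ ⊥ := by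
    intro hbot
    rw [specMult, hbot, finrank_bot] at h
    exact Nat.lt_irrefl 0 h
  have : Module.End.HasUnifEigenvalue Φ β ⊤ := hne
  exact this.lt zero_lt_one

lemma graded_step {V : Type*} [AddCommGroup V] [Module ℂ V] [FiniteDimensional ℂ V]
    (N : V →ₗ[ℂ] V) (Fi Fi1 : Submodule ℂ V)
    (hNi : ∀ v ∈ Fi, N v ∈ Fi) (hNi1 : ∀ v ∈ Fi1, N v ∈ Fi1)
    (h : Fi1.comap Fi.subtype ≤ (Fi1.comap Fi.subtype).comap (N.restrict hNi)) :
    finrank ℂ ↥(LinearMap.ker N ⊓ Fi) ≤ finrank ℂ ↥(LinearMap.ker N ⊓ Fi1) +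
      finrank ℂ ↥(LinearMap.ker (Submodule.mapQ (Fi1.comap Fi.subtype)
        (Fi1.comap Fi.subtype) (N.restrict hNi) h)) := by
  classical
  set ψ : ↥(LinearMap.ker N ⊓ Fi) →ₗ[ℂ] (↥Fi ⧸ Fi1.comap Fi.subtype) :=
    (Fi1.comap Fi.subtype).mkQ ∘ₗ Submodule.inclusion inf_le_right with hψ
  have h1 := LinearMap.finrank_range_add_finrank_ker ψ
  have h2 : LinearMap.range ψ ≤ LinearMap.ker (Submodule.mapQ (Fi1.comap Fi.subtype)
      (Fi1.comap Fi.subtype) (N.restrict hNi) h) := by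
    rintro y ⟨x, rfl⟩
    rw [LinearMap.mem_ker]
    have hrw : ψ x = (Fi1.comap Fi.subtype).mkQ (Submodule.inclusion inf_le_right x) := rfl
    rw [hrw, Submodule.mkQ_apply, Submodule.mapQ_apply, Submodule.Quotient.mk_eq_zero]
    show (N.restrict hNi (Submodule.inclusion inf_le_right x) : V) ∈ Fi1
    rw [LinearMap.restrict_coe_apply]
    have hx : (x : V) ∈ LinearMap.ker N := x.2.1
    rw [LinearMap.mem_ker] at hx
    show N ((x : V)) ∈ Fi1
    rw [hx]
    exact Fi1.zero_mem
  have h2' : finrank ℂ ↥(LinearMap.range ψ) ≤ finrank ℂ ↥(LinearMap.ker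
      (Submodule.mapQ (Fi1.comap Fi.subtype) (Fi1.comap Fi.subtype) (N.restrict hNi) h)) :=
    Submodule.finrank_mono h2
  have h3 : finrank ℂ ↥(LinearMap.ker ψ) ≤ finrank ℂ ↥(LinearMap.ker N ⊓ Fi1) := by
    have hmem : ∀ x : ↥(LinearMap.ker ψ),
        ((LinearMap.ker N ⊓ Fi).subtype ∘ₗ (LinearMap.ker ψ).subtype) x ∈
          LinearMap.ker N ⊓ Fi1 := by
      intro x
      have hx : ψ x.1 = 0 := x.2
      have hx' : (Fi1.comap Fi.subtype).mkQ
          (Submodule.inclusion (inf_le_right : LinearMap.ker N ⊓ Fi ≤ Fi) x.1) = 0 := hx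
      have hx2 : (Submodule.inclusion (inf_le_right : LinearMap.ker N ⊓ Fi ≤ Fi) x.1) ∈
          Fi1.comap Fi.subtype := by
        rwa [Submodule.mkQ_apply, Submodule.Quotient.mk_eq_zero] at hx'
      exact ⟨x.1.2.1, hx2⟩
    set f := LinearMap.codRestrict (LinearMap.ker N ⊓ Fi1)
      ((LinearMap.ker N ⊓ Fi).subtype ∘ₗ (LinearMap.ker ψ).subtype) hmem
    have hinj : Function.Injective f := by
      rw [← LinearMap.ker_eq_bot, LinearMap.ker_codRestrict]
      rw [LinearMap.ker_eq_bot]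
      exact (Submodule.injective_subtype _).comp (Submodule.injective_subtype _)
    exact LinearMap.finrank_le_finrank_of_injective hinj
  omega

lemma ker_ge_bWM (q : ℝ) (hq : 1 < q) (j : ℤ)
    {V : Type*} [AddCommGroup V] [Module ℂ V] [FiniteDimensional ℂ V]
    (Φ N : V →ₗ[ℂ] V)
    (hrel : N ∘ₗ Φ = (q : ℂ) • (Φ ∘ₗ N))
    (W : Finset ℂ)
    (hWeig : ∀ α : ℂ, α ∈ W ↔ Module.End.HasEigenvalue Φ α)
    (hwm_i : ∀ α ∈ W, q ^ ((j : ℝ) / 2) < ‖α‖ →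
      specMult Φ α ≤ specMult Φ ((q : ℂ)⁻¹ * α)) :
    bWM q j Φ W ≤ finrank ℂ (LinearMap.ker N) := by
  classical
  have hq0 : (0:ℝ) < q := lt_trans zero_lt_one hq
  have hqC : (q:ℂ) ≠ 0 := by
    simp only [ne_eq, Complex.ofReal_eq_zero]
    exact ne_of_gt hq0
  unfold bWM
  set c : ℝ := q ^ ((j : ℝ) / 2) with hcdef
  have hc0 : 0 < c := Real.rpow_pos_of_pos hq0 _
  have hcqc : c < q * c := by nlinarith
  -- absolute value computations
  have habsq : ∀ α : ℂ, ‖(q:ℂ) * α‖ = q * ‖α‖ := by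
    intro α
    rw [norm_mul, Complex.norm_real, Real.norm_eq_abs, abs_of_pos hq0]
  have habsqi : ∀ α : ℂ, ‖(q:ℂ)⁻¹ * α‖ = q⁻¹ * ‖α‖ := by
    intro α
    rw [norm_mul, norm_inv, Complex.norm_real, Real.norm_eq_abs, abs_of_pos hq0]
  -- membership from positive multiplicity
  have hmem : ∀ β : ℂ, 0 < specMult Φ β → β ∈ W := fun β h =>
    (hWeig β).mpr (mem_of_specMult_pos Φ β h)
  -- monotonicity above the line
  have hqmul_le : ∀ α ∈ W, c ≤ ‖α‖ → specMult Φ ((q:ℂ) * α) ≤ specMult Φ α := by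
    intro α hα hcα
    rcases Nat.eq_zero_or_pos (specMult Φ ((q:ℂ) * α)) with h0 | hpos
    · rw [h0]; exact Nat.zero_le _
    · have hqαW : (q:ℂ) * α ∈ W := hmem _ hpos
      have hgt : c < ‖(q:ℂ) * α‖ := by
        rw [habsq]; nlinarith
      have h := hwm_i _ hqαW hgt
      rwa [inv_mul_cancel_left₀ hqC] at h
  -- eigen-kernel family
  have hmaps : ∀ α : ℂ, ∀ v ∈ Module.End.maxGenEigenspace Φ α,
      N v ∈ Module.End.maxGenEigenspace Φ ((q:ℂ)⁻¹ * α) := fun α =>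
    N_maps_eigen Φ N (q:ℂ) hqC hrel α
  set K : ℂ → Submodule ℂ V := fun α => Module.End.maxGenEigenspace Φ α ⊓ LinearMap.ker N
    with hK
  have hind : iSupIndep K :=
    (Module.End.independent_maxGenEigenspace Φ).mono (fun α => inf_le_left)
  have hbound : ∀ α : ℂ, specMult Φ α ≤ finrank ℂ (K α) + specMult Φ ((q:ℂ)⁻¹ * α) := fun α =>
    specMult_le_ker_add Φ N α _ (hmaps α)
  -- finsets
  set Wc := W.filter (fun α => c ≤ ‖α‖) with hWc
  set Wqc := W.filter (fun α => q * c ≤ ‖α‖) with hWqc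
  set Band := Wc.filter (fun α => ‖α‖ < q * c) with hBand
  set A := W.filter (fun α => ‖α‖ < q * c) with hA
  set Alow := W.filter (fun α => ‖α‖ < c) with hAlow
  -- step A
  have e1 : ∑ α ∈ Wc, (specMult Φ α - specMult Φ ((q:ℂ) * α))
      = ∑ α ∈ Wc, specMult Φ α - ∑ α ∈ Wc, specMult Φ ((q:ℂ) * α) := by
    refine Finset.sum_tsub_distrib Wc (fun α hα => ?_)
    obtain ⟨hαW, hαc⟩ := Finset.mem_filter.mp hα
    exact hqmul_le α hαW hαc
  -- step B
  have e2 : ∑ α ∈ Wc, specMult Φ ((q:ℂ) * α) = ∑ β ∈ Wqc, specMult Φ β := by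
    rw [← Finset.sum_filter_of_ne (s := Wc) (p := fun α => 0 < specMult Φ ((q:ℂ) * α))
        (fun x _ h => Nat.pos_of_ne_zero h),
      ← Finset.sum_filter_of_ne (s := Wqc) (p := fun β => 0 < specMult Φ β)
        (fun x _ h => Nat.pos_of_ne_zero h)]
    refine Finset.sum_nbij' (fun α => (q:ℂ) * α) (fun β => (q:ℂ)⁻¹ * β) ?_ ?_ ?_ ?_ ?_
    · intro a ha
      obtain ⟨haWc, hapos⟩ := Finset.mem_filter.mp ha
      obtain ⟨haW, hac⟩ := Finset.mem_filter.mp haWc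
      refine Finset.mem_filter.mpr ⟨Finset.mem_filter.mpr ⟨hmem _ hapos, ?_⟩, hapos⟩
      rw [habsq]
      exact mul_le_mul_of_nonneg_left hac (le_of_lt hq0)
    · intro b hb
      obtain ⟨hbWqc, hbpos⟩ := Finset.mem_filter.mp hb
      obtain ⟨hbW, hbqc⟩ := Finset.mem_filter.mp hbWqc
      have hbc : c < ‖b‖ := lt_of_lt_of_le hcqc hbqc
      have hble : specMult Φ b ≤ specMult Φ ((q:ℂ)⁻¹ * b) := hwm_i b hbW hbc
      have hpos' : 0 < specMult Φ ((q:ℂ)⁻¹ * b) := lt_of_lt_of_le hbpos hble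
      refine Finset.mem_filter.mpr ⟨Finset.mem_filter.mpr ⟨hmem _ hpos', ?_⟩, ?_⟩
      · rw [habsqi]
        rw [le_inv_mul_iff₀ hq0]
        exact hbqc
      · rw [mul_inv_cancel_left₀ hqC]
        exact hbpos
    · intro a _
      exact inv_mul_cancel_left₀ hqC a
    · intro b _
      exact mul_inv_cancel_left₀ hqC b
    · intro a _
      rfl
  -- step C
  have e3 : ∑ α ∈ Wc, specMult Φ α = ∑ α ∈ Band, specMult Φ α + ∑ α ∈ Wqc, specMult Φ α := by
    have hset : Wc.filter (fun α => ¬ ‖α‖ < q * c) = Wqc := by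
      rw [hWc, Finset.filter_filter, hWqc]
      refine Finset.filter_congr (fun x _ => ?_)
      constructor
      · rintro ⟨h1, h2⟩
        exact not_lt.mp h2
      · intro h
        exact ⟨le_trans (le_of_lt hcqc) h, not_lt.mpr h⟩
    rw [hBand, ← Finset.sum_filter_add_sum_filter_not Wc (fun α => ‖α‖ < q * c), hset]
  have e4 : ∑ α ∈ Wc, (specMult Φ α - specMult Φ ((q:ℂ) * α)) = ∑ α ∈ Band, specMult Φ α := by
    rw [e1, e2, e3]
    omega
  -- kernel side
  have k1 : ∑ α ∈ A, (specMult Φ α - specMult Φ ((q:ℂ)⁻¹ * α)) ≤ ∑ α ∈ A, finrank ℂ (K α) :=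
    Finset.sum_le_sum (fun α _ => tsub_le_iff_right.mpr (hbound α))
  have k2 : ∑ α ∈ A, finrank ℂ (K α) ≤ finrank ℂ (LinearMap.ker N) := by
    rw [sum_finrank_eq_finrank_sup hind A]
    exact Submodule.finrank_mono (Finset.sup_le fun α _ => inf_le_right)
  have k3 : ∑ α ∈ A, specMult Φ α = ∑ α ∈ Band, specMult Φ α + ∑ α ∈ Alow, specMult Φ α := by
    have hset1 : A.filter (fun α => c ≤ ‖α‖) = Band := by
      rw [hA, Finset.filter_filter, hBand, hWc, Finset.filter_filter]
      exact Finset.filter_congr (fun x _ => and_comm)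
    have hset2 : A.filter (fun α => ¬ c ≤ ‖α‖) = Alow := by
      rw [hA, Finset.filter_filter, hAlow]
      refine Finset.filter_congr (fun x _ => ?_)
      constructor
      · rintro ⟨h1, h2⟩
        exact not_le.mp h2
      · intro h
        exact ⟨lt_trans h hcqc, not_le.mpr h⟩
    rw [← Finset.sum_filter_add_sum_filter_not A (fun α => c ≤ ‖α‖), hset1, hset2]
  have k4 : ∑ α ∈ A, specMult Φ ((q:ℂ)⁻¹ * α) ≤ ∑ β ∈ Alow, specMult Φ β := by
    rw [← Finset.sum_filter_of_ne (s := A) (p := fun α => 0 < specMult Φ ((q:ℂ)⁻¹ * α))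
        (fun x _ h => Nat.pos_of_ne_zero h)]
    have hinj : Set.InjOn (fun α => (q:ℂ)⁻¹ * α)
        (A.filter (fun α => 0 < specMult Φ ((q:ℂ)⁻¹ * α))) := by
      intro x _ y _ h
      exact mul_left_cancel₀ (inv_ne_zero hqC) h
    calc ∑ α ∈ A.filter (fun α => 0 < specMult Φ ((q:ℂ)⁻¹ * α)), specMult Φ ((q:ℂ)⁻¹ * α)
        = ∑ β ∈ (A.filter (fun α => 0 < specMult Φ ((q:ℂ)⁻¹ * α))).image
            (fun α => (q:ℂ)⁻¹ * α), specMult Φ β := (Finset.sum_image hinj).symm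
      _ ≤ ∑ β ∈ Alow, specMult Φ β := by
          refine Finset.sum_le_sum_of_subset (fun β hβ => ?_)
          obtain ⟨a, ha, rfl⟩ := Finset.mem_image.mp hβ
          obtain ⟨haA, hapos⟩ := Finset.mem_filter.mp ha
          obtain ⟨haW, haqc⟩ := Finset.mem_filter.mp haA
          refine Finset.mem_filter.mpr ⟨hmem _ hapos, ?_⟩
          rw [habsqi]
          rw [inv_mul_lt_iff₀ hq0]
          exact haqc
  have k5 : ∑ α ∈ Band, specMult Φ α ≤ ∑ α ∈ A, (specMult Φ α - specMult Φ ((q:ℂ)⁻¹ * α)) := by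
    have h := Finset.sum_le_sum (s := A)
      (fun α (_ : α ∈ A) => le_tsub_add (a := specMult Φ ((q:ℂ)⁻¹ * α)) (b := specMult Φ α))
    rw [Finset.sum_add_distrib] at h
    omega
  rw [e4]
  exact le_trans k5 (le_trans k1 k2)


/-- Proposition 3 (quantitative form).  Let `(V, Φ, N)` satisfy the Weil–Deligne relation
and carry a filtration by `(Φ, N)`-stable submodules, whose eigenvalue data `(W, m)` is
wm-`q`-pure of weight `j`.  If the associated graded module is `q`-pure of weight `j`
(modeled as: the kernel dimension of the induced `N` on the graded module equals
`b(W, m)`), then the kernel-dimension chain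
`dim ker(N on Gr V) ≥ dim ker(N on V) ≥ b(W, m)` holds with equality
`dim ker(N on V) = b(W, m)`, i.e. `V` is `q`-pure of weight `j`. -/
theorem graded_pure_implies_pure (q : ℝ) (hq : 1 < q) (j : ℤ)
    {V : Type*} [AddCommGroup V] [Module ℂ V] [FiniteDimensional ℂ V]
    (Φ N : V →ₗ[ℂ] V) (hΦ : IsUnit Φ) (hNnil : IsNilpotent N)
    (hrel : N ∘ₗ Φ = (q : ℂ) • (Φ ∘ₗ N))
    (n : ℕ) (F : ℕ → Submodule ℂ V)
    (hF0 : F 0 = ⊤) (hFn : F n = ⊥) (hmono : ∀ i, F (i + 1) ≤ F i)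
    (hΦF : ∀ i, ∀ v ∈ F i, Φ v ∈ F i) (hNF : ∀ i, ∀ v ∈ F i, N v ∈ F i)
    (W : Finset ℂ)
    (hWeig : ∀ α : ℂ, α ∈ W ↔ Module.End.HasEigenvalue Φ α)
    (hWabs : ∀ α ∈ W, ∃ k : ℤ, ‖α‖ = q ^ ((k : ℝ) / 2))
    (hwm_i : ∀ α ∈ W, q ^ ((j : ℝ) / 2) < ‖α‖ →
      specMult Φ α ≤ specMult Φ ((q : ℂ)⁻¹ * α))
    (hwm_ii : ∀ α ∈ W, ∀ k : ℤ, ‖α‖ = q ^ ((k : ℝ) / 2) →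
      specMult Φ α = specMult Φ (((q : ℂ) ^ (j - k)) * α))
    (hGrPure :
      (∑ i ∈ Finset.range n,
        Module.finrank ℂ (LinearMap.ker
          (Submodule.mapQ ((F (i + 1)).comap (F i).subtype)
            ((F (i + 1)).comap (F i).subtype) (N.restrict (hNF i))
            (fun x hx => hNF (i + 1) x hx)))) = bWM q j Φ W) :
    (∑ i ∈ Finset.range n,
        Module.finrank ℂ (LinearMap.ker
          (Submodule.mapQ ((F (i + 1)).comap (F i).subtype)
            ((F (i + 1)).comap (F i).subtype) (N.restrict (hNF i))
            (fun x hx => hNF (i + 1) x hx)))) ≥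
        Module.finrank ℂ (LinearMap.ker N) ∧
      Module.finrank ℂ (LinearMap.ker N) ≥ bWM q j Φ W ∧
      Module.finrank ℂ (LinearMap.ker N) = bWM q j Φ W := by
  classical
  have key : ∀ k : ℕ,
      finrank ℂ ↥(LinearMap.ker N ⊓ F 0) ≤ finrank ℂ ↥(LinearMap.ker N ⊓ F k) +
        ∑ i ∈ Finset.range k,
          Module.finrank ℂ (LinearMap.ker
            (Submodule.mapQ ((F (i + 1)).comap (F i).subtype)
              ((F (i + 1)).comap (F i).subtype) (N.restrict (hNF i))
              (fun x hx => hNF (i + 1) x hx))) := by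
    intro k
    induction k with
    | zero => simp
    | succ k ih =>
      have hstep := graded_step N (F k) (F (k + 1)) (hNF k) (hNF (k + 1))
        (fun x hx => hNF (k + 1) x hx)
      rw [Finset.sum_range_succ]
      omega
  have h1 : finrank ℂ (LinearMap.ker N) ≤
      ∑ i ∈ Finset.range n,
        Module.finrank ℂ (LinearMap.ker
          (Submodule.mapQ ((F (i + 1)).comap (F i).subtype)
            ((F (i + 1)).comap (F i).subtype) (N.restrict (hNF i))
            (fun x hx => hNF (i + 1) x hx))) := by
    have h := key n
    rw [hF0, hFn, inf_top_eq, inf_bot_eq, finrank_bot, Nat.zero_add] at h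
    exact h
  have h2 : bWM q j Φ W ≤ finrank ℂ (LinearMap.ker N) :=
    ker_ge_bWM q hq j Φ N hrel W hWeig hwm_i
  exact ⟨h1, h2, le_antisymm (le_trans h1 (le_of_eq hGrPure)) h2⟩
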